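/- Let {0} = N'_0 ⊂ N'_1 ⊂ ... ⊂ N'_r = F_q^{s'} be a chain of linear [s', k'_u, δ'_u]_q-codes generated by vectors v_1,...,v_{s'} in upper triangular position (the first i−1 entries of v_i are 0), let e_u = k'_u − k'_{u−1} and q_u = q^{e_u}, and for positive integers s_1 ≤ s_2 ≤ ... ≤ s_r let N_u be an ((s_u,n),α,K_u,δ_u)_{q_u}-space. Then there exists an ((s_1 e_1 + ... + s_r e_r, n), α, K_1···K_r, δ)_q-space with δ ≥ min_{1≤u≤r} δ_u δ'_u. -/

import Mathlib

/-- Sum of the `α` largest elements of a finite set of naturals. -/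
def topSum (α : ℕ) (T : Finset ℕ) : ℕ := ((T.sort (· ≤ ·)).reverse.take α).sum

/-- The higher order weight `μ_{α,n}` of a single block `a ∈ G^n`. -/
def muBlock (α : ℕ) {G : Type*} [Zero G] [DecidableEq G] {n : ℕ} (a : Fin n → G) : ℕ :=
  topSum α ((Finset.univ.filter (fun i => a i ≠ 0)).image (fun i : Fin n => (i : ℕ) + 1))

/-- The higher order weight `μ_{α,n}` on `G^{ns}`, extended additively over the `s` blocks. -/
def muWt (α : ℕ) {G : Type*} [Zero G] [DecidableEq G] {s n : ℕ} (A : Fin s → Fin n → G) : ℕ :=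
  ∑ j, muBlock α (A j)

/-- Hamming weight of a codeword (the weight `μ_{1,1}` for `n' = α' = 1`). -/
def hammingW {F : Type*} [Zero F] [DecidableEq F] {s' : ℕ} (w : Fin s' → F) : ℕ :=
  (Finset.univ.filter (fun j => w j ≠ 0)).card

lemma topSum_spec (α : ℕ) (T : Finset ℕ) :
    ∃ S : Finset ℕ, S ⊆ T ∧ S.card ≤ α ∧ S.sum id = topSum α T := by
  classical
  set L : List ℕ := (T.sort (· ≤ ·)).reverse with hL
  have hnd : L.Nodup := List.nodup_reverse.mpr (T.sort_nodup (· ≤ ·))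
  have hndt : (L.take α).Nodup := hnd.sublist (L.take_sublist α)
  refine ⟨(L.take α).toFinset, ?_, ?_, ?_⟩
  · intro x hx
    rw [List.mem_toFinset] at hx
    have : x ∈ L := (L.take_sublist α).mem hx
    rw [hL, List.mem_reverse, Finset.mem_sort] at this
    exact this
  · rw [List.toFinset_card_of_nodup hndt]
    exact le_trans (List.length_take_le _ _) le_rfl
  · rw [List.sum_toFinset _ hndt]
    simp [topSum, hL]

lemma sum_le_topSum {α : ℕ} {T S : Finset ℕ} (hST : S ⊆ T) (hcard : S.card ≤ α) :
    ∑ p ∈ S, p ≤ topSum α T := by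
  classical
  set L : List ℕ := (T.sort (· ≤ ·)).reverse with hL
  have hnd : L.Nodup := List.nodup_reverse.mpr (T.sort_nodup (· ≤ ·))
  have hpair : L.Pairwise (fun a b => b ≤ a) := by
    rw [hL, List.pairwise_reverse]
    exact (Finset.pairwise_sort T (· ≤ ·)).imp (fun h => h)
  set P : List ℕ := L.take α with hP
  set Q : List ℕ := L.drop α with hQ
  have hPQ : P ++ Q = L := L.take_append_drop α
  have hndP : P.Nodup := hnd.sublist (L.take_sublist α)
  have hndQ : Q.Nodup := hnd.sublist (L.drop_sublist α)
  have hrel : ∀ a ∈ P, ∀ b ∈ Q, b ≤ a := by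
    have := hpair
    rw [← hPQ, List.pairwise_append] at this
    exact this.2.2
  have hTL : T = P.toFinset ∪ Q.toFinset := by
    rw [← List.toFinset_append, hPQ, hL, List.toFinset_reverse, Finset.sort_toFinset]
  have hdisj : Disjoint P.toFinset Q.toFinset := by
    have : P.Disjoint Q := by
      have := hnd; rw [← hPQ, List.nodup_append] at this
      exact fun a ha hb => this.2.2 a ha a hb rfl
    exact List.disjoint_toFinset_iff_disjoint.mpr this
  have htop : topSum α T = ∑ p ∈ P.toFinset, p := by
    rw [List.sum_toFinset _ hndP]
    simp [topSum, hL, hP]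
  have hSsplit : S = (S ∩ P.toFinset) ∪ (S ∩ Q.toFinset) := by
    rw [← Finset.inter_union_distrib_left, ← hTL]
    exact (Finset.inter_eq_left.mpr hST).symm
  have hdisj2 : Disjoint (S ∩ P.toFinset) (S ∩ Q.toFinset) :=
    hdisj.mono (Finset.inter_subset_right) (Finset.inter_subset_right)
  rw [hSsplit, Finset.sum_union hdisj2, htop]
  rcases Finset.eq_empty_or_nonempty (S ∩ Q.toFinset) with hSQ | hSQ
  · rw [hSQ, Finset.sum_empty, add_zero]
    exact Finset.sum_le_sum_of_subset (Finset.inter_subset_right)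
  · have hPlen : P.length = α := by
      rw [hP, List.length_take]
      rcases Nat.le_total L.length α with h | h
      · exfalso
        obtain ⟨x, hx⟩ := hSQ
        rw [Finset.mem_inter, List.mem_toFinset] at hx
        have : Q = [] := by rw [hQ, List.drop_eq_nil_iff]; exact h
        rw [this] at hx; simp at hx
      · omega
    have hPScard : (P.toFinset \ (S ∩ P.toFinset)).card = α - (S ∩ P.toFinset).card := by
      rw [Finset.card_sdiff_of_subset (Finset.inter_subset_right), List.toFinset_card_of_nodup hndP, hPlen]
    have hcardSQ : (S ∩ Q.toFinset).card ≤ (P.toFinset \ (S ∩ P.toFinset)).card := by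
      rw [hPScard]
      have h1 : (S ∩ P.toFinset).card + (S ∩ Q.toFinset).card = S.card := by
        rw [← Finset.card_union_of_disjoint hdisj2, ← hSsplit]
      omega
    have hPSne : (P.toFinset \ (S ∩ P.toFinset)).Nonempty := by
      rw [← Finset.card_pos]
      have := hSQ.card_pos
      omega
    set c : ℕ := (P.toFinset \ (S ∩ P.toFinset)).min' hPSne with hc
    have hcP : c ∈ P.toFinset := (Finset.sdiff_subset) (Finset.min'_mem _ hPSne)
    have h2 : ∑ p ∈ S ∩ Q.toFinset, p ≤ (S ∩ Q.toFinset).card • c := by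
      apply Finset.sum_le_card_nsmul
      intro x hx
      rw [Finset.mem_inter, List.mem_toFinset] at hx
      exact hrel c (List.mem_toFinset.mp hcP) x hx.2
    have h3 : (P.toFinset \ (S ∩ P.toFinset)).card • c
        ≤ ∑ p ∈ P.toFinset \ (S ∩ P.toFinset), p := by
      apply Finset.card_nsmul_le_sum
      intro x hx
      exact Finset.min'_le _ _ hx
    have h4 : (S ∩ Q.toFinset).card • c ≤ (P.toFinset \ (S ∩ P.toFinset)).card • c :=
      Nat.mul_le_mul_right c hcardSQ
    have h5 : ∑ p ∈ S ∩ P.toFinset, p + ∑ p ∈ P.toFinset \ (S ∩ P.toFinset), p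
        = ∑ p ∈ P.toFinset, p := by
      rw [← Finset.sum_union (Finset.disjoint_sdiff),
        Finset.union_sdiff_of_subset (Finset.inter_subset_right)]
    omega

lemma muBlock_spec {G : Type*} [Zero G] [DecidableEq G] {n : ℕ} (α : ℕ) (a : Fin n → G) :
    ∃ St : Finset ℕ, St.card ≤ α ∧ (∀ q ∈ St, ∃ i : Fin n, a i ≠ 0 ∧ q = (i : ℕ) + 1) ∧
      ∑ q ∈ St, q = muBlock α a := by
  classical
  obtain ⟨S, h1, h2, h3⟩ := topSum_spec α
    ((Finset.univ.filter (fun i => a i ≠ 0)).image (fun i : Fin n => (i : ℕ) + 1))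
  refine ⟨S, h2, ?_, ?_⟩
  · intro q hq
    have := h1 hq
    rw [Finset.mem_image] at this
    obtain ⟨i, hi, he⟩ := this
    exact ⟨i, (Finset.mem_filter.mp hi).2, he.symm⟩
  · exact h3

lemma sum_le_muBlock {G : Type*} [Zero G] [DecidableEq G] {n α : ℕ} (a : Fin n → G)
    (St : Finset ℕ) (hsub : ∀ q ∈ St, ∃ i : Fin n, a i ≠ 0 ∧ q = (i : ℕ) + 1)
    (hcard : St.card ≤ α) : ∑ q ∈ St, q ≤ muBlock α a := by
  classical
  apply sum_le_topSum _ hcard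
  intro q hq
  obtain ⟨i, hi, rfl⟩ := hsub q hq
  rw [Finset.mem_image]
  exact ⟨i, Finset.mem_filter.mpr ⟨Finset.mem_univ _, hi⟩, rfl⟩

section BZ

variable {F : Type*} [Field F] {s' r n : ℕ} (k' : ℕ → ℕ) (v : ℕ → Fin s' → F) (ss : Fin r → ℕ)

/-- index into `Fin s'` from a pair (outer code `u`, generator offset `t`). -/
def pairIdx (hb : ∀ u : Fin r, k' ((u : ℕ) + 1) ≤ s')
    (p : (u : Fin r) × Fin (k' ((u : ℕ) + 1) - k' (u : ℕ))) : Fin s' :=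
  ⟨k' (p.1 : ℕ) + (p.2 : ℕ), by have h1 := p.2.isLt; have h2 := hb p.1; omega⟩

/-- the inner-code word appearing at abstract column `jv`, block position `i`. -/
def colW (A : (u : Fin r) → Fin (ss u) → Fin n → Fin (k' ((u : ℕ) + 1) - k' (u : ℕ)) → F)
    (jv : ℕ) (i : Fin n) : Fin s' → F :=
  ∑ p : (u : Fin r) × Fin (k' ((u : ℕ) + 1) - k' (u : ℕ)),
    (if h : jv < ss p.1 then A p.1 ⟨jv, h⟩ i p.2 else 0) • v (k' (p.1 : ℕ) + (p.2 : ℕ))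

/-- the concatenated word. -/
def encBZ (hb : ∀ u : Fin r, k' ((u : ℕ) + 1) ≤ s')
    (A : (u : Fin r) → Fin (ss u) → Fin n → Fin (k' ((u : ℕ) + 1) - k' (u : ℕ)) → F)
    (y : (u : Fin r) × (Fin (k' ((u : ℕ) + 1) - k' (u : ℕ)) × Fin (ss u))) (i : Fin n) : F :=
  colW k' v ss A (y.2.2 : ℕ) i (pairIdx k' hb ⟨y.1, y.2.1⟩)

lemma colW_sub (A B : (u : Fin r) → Fin (ss u) → Fin n → Fin (k' ((u : ℕ) + 1) - k' (u : ℕ)) → F)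
    (jv : ℕ) (i : Fin n) :
    colW k' v ss (fun u => A u - B u) jv i = colW k' v ss A jv i - colW k' v ss B jv i := by
  classical
  unfold colW
  rw [← Finset.sum_sub_distrib]
  refine Finset.sum_congr rfl fun p _ => ?_
  by_cases h : jv < ss p.1 <;> simp [h, sub_smul]

lemma colW_mem_span (A : (u : Fin r) → Fin (ss u) → Fin n → Fin (k' ((u : ℕ) + 1) - k' (u : ℕ)) → F)
    (jv : ℕ) (i : Fin n) (U : Fin r)
    (hk : ∀ p : (u : Fin r) × Fin (k' ((u : ℕ) + 1) - k' (u : ℕ)),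
      p.1 ≤ U → k' (p.1 : ℕ) + (p.2 : ℕ) < k' ((U : ℕ) + 1))
    (hz : ∀ u' : Fin r, U < u' → A u' = 0) :
    colW k' v ss A jv i ∈ Submodule.span F (v '' {idx | idx < k' ((U : ℕ) + 1)}) := by
  classical
  apply Submodule.sum_mem
  intro p _
  by_cases hp : p.1 ≤ U
  · exact Submodule.smul_mem _ _ (Submodule.subset_span ⟨_, hk p hp, rfl⟩)
  · have h0 : A p.1 = 0 := hz p.1 (lt_of_not_ge hp)
    have : (if h : jv < ss p.1 then A p.1 ⟨jv, h⟩ i p.2 else 0) = 0 := by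
      by_cases h : jv < ss p.1 <;> simp [h, h0]
    rw [this, zero_smul]
    exact Submodule.zero_mem _

lemma colW_ne_zero (hb : ∀ u : Fin r, k' ((u : ℕ) + 1) ≤ s')
    (hbij : Function.Bijective (pairIdx (r := r) k' hb))
    (hlin : LinearIndependent F (fun i : Fin s' => v (i : ℕ)))
    (A : (u : Fin r) → Fin (ss u) → Fin n → Fin (k' ((u : ℕ) + 1) - k' (u : ℕ)) → F)
    (jv : ℕ) (i : Fin n)
    (hq : ∃ p : (u : Fin r) × Fin (k' ((u : ℕ) + 1) - k' (u : ℕ)),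
      (if h : jv < ss p.1 then A p.1 ⟨jv, h⟩ i p.2 else 0) ≠ 0) :
    colW k' v ss A jv i ≠ 0 := by
  classical
  set E := Equiv.ofBijective _ hbij with hE
  set c : ((u : Fin r) × Fin (k' ((u : ℕ) + 1) - k' (u : ℕ))) → F :=
    fun p => if h : jv < ss p.1 then A p.1 ⟨jv, h⟩ i p.2 else 0 with hcdef
  intro h0
  have hsum : ∑ m : Fin s', c (E.symm m) • (fun idx : Fin s' => v (idx : ℕ)) m = 0 := by
    rw [← Equiv.sum_comp E (fun m => c (E.symm m) • (fun idx : Fin s' => v (idx : ℕ)) m)]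
    have : ∀ p, c (E.symm (E p)) • (fun idx : Fin s' => v (idx : ℕ)) (E p)
        = c p • v (k' (p.1 : ℕ) + (p.2 : ℕ)) := by
      intro p
      rw [Equiv.symm_apply_apply]
      rfl
    rw [Finset.sum_congr rfl fun p _ => this p]
    exact h0
  obtain ⟨p, hp⟩ := hq
  have := Fintype.linearIndependent_iff.mp hlin (fun m => c (E.symm m)) hsum (E p)
  rw [Equiv.symm_apply_apply] at this
  exact hp this

lemma colW_deleted (hb : ∀ u : Fin r, k' ((u : ℕ) + 1) ≤ s')
    (htri : ∀ i : ℕ, ∀ j : Fin s', (j : ℕ) < i → v i j = 0)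
    (hsep : ∀ p q : (u : Fin r) × Fin (k' ((u : ℕ) + 1) - k' (u : ℕ)),
      k' (p.1 : ℕ) + (p.2 : ℕ) ≤ k' (q.1 : ℕ) + (q.2 : ℕ) → p.1 ≤ q.1)
    (hss : ∀ u' u : Fin r, u' ≤ u → ss u' ≤ ss u)
    (A : (u : Fin r) → Fin (ss u) → Fin n → Fin (k' ((u : ℕ) + 1) - k' (u : ℕ)) → F)
    (jv : ℕ) (i : Fin n)
    (q : (u : Fin r) × Fin (k' ((u : ℕ) + 1) - k' (u : ℕ))) (hjv : ss q.1 ≤ jv) :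
    colW k' v ss A jv i (pairIdx k' hb q) = 0 := by
  classical
  unfold colW
  rw [Finset.sum_apply]
  apply Finset.sum_eq_zero
  intro p _
  rw [Pi.smul_apply]
  by_cases h : jv < ss p.1
  · have hv : v (k' (p.1 : ℕ) + (p.2 : ℕ)) (pairIdx k' hb q) = 0 := by
      apply htri
      show k' (q.1 : ℕ) + (q.2 : ℕ) < k' (p.1 : ℕ) + (p.2 : ℕ)
      by_contra hcon
      push_neg at hcon
      have := hsep p q hcon
      have := hss p.1 q.1 this
      omega
    rw [hv, smul_zero]
  · simp [h]

end BZ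

section BZ2
variable {F : Type*} [Field F] {s' r n : ℕ} (k' : ℕ → ℕ) (v : ℕ → Fin s' → F) (ss : Fin r → ℕ)

/-- column weight contribution of pair `p` at abstract column `jv`. -/
def GfBZ [DecidableEq F] (α : ℕ) (hb : ∀ u : Fin r, k' ((u : ℕ) + 1) ≤ s')
    (D : (u : Fin r) → Fin (ss u) → Fin n → Fin (k' ((u : ℕ) + 1) - k' (u : ℕ)) → F)
    (p : (u : Fin r) × Fin (k' ((u : ℕ) + 1) - k' (u : ℕ))) (jv : ℕ) : ℕ :=
  if h : jv < ss p.1 then muBlock α (encBZ k' v ss hb D ⟨p.1, (p.2, ⟨jv, h⟩)⟩) else 0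

lemma sumBZ [DecidableEq F] (α : ℕ) (hb : ∀ u : Fin r, k' ((u : ℕ) + 1) ≤ s')
    (D : (u : Fin r) → Fin (ss u) → Fin n → Fin (k' ((u : ℕ) + 1) - k' (u : ℕ)) → F) :
    (∑ y : (u : Fin r) × (Fin (k' ((u : ℕ) + 1) - k' (u : ℕ)) × Fin (ss u)),
        muBlock α (encBZ k' v ss hb D y))
      = ∑ p : (u : Fin r) × Fin (k' ((u : ℕ) + 1) - k' (u : ℕ)),
          ∑ jv ∈ Finset.range (ss p.1), GfBZ k' v ss α hb D p jv := by
  classical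
  calc (∑ y : (u : Fin r) × (Fin (k' ((u : ℕ) + 1) - k' (u : ℕ)) × Fin (ss u)),
        muBlock α (encBZ k' v ss hb D y))
      = ∑ u : Fin r, ∑ z : Fin (k' ((u : ℕ) + 1) - k' (u : ℕ)) × Fin (ss u),
          muBlock α (encBZ k' v ss hb D ⟨u, z⟩) := by
        rw [← Finset.univ_sigma_univ, Finset.sum_sigma]
    _ = ∑ u : Fin r, ∑ t : Fin (k' ((u : ℕ) + 1) - k' (u : ℕ)), ∑ j : Fin (ss u),
          muBlock α (encBZ k' v ss hb D ⟨u, (t, j)⟩) := by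
        exact Finset.sum_congr rfl fun u _ => Fintype.sum_prod_type _
    _ = ∑ u : Fin r, ∑ t : Fin (k' ((u : ℕ) + 1) - k' (u : ℕ)),
          ∑ jv ∈ Finset.range (ss u), GfBZ k' v ss α hb D ⟨u, t⟩ jv := by
        refine Finset.sum_congr rfl fun u _ => Finset.sum_congr rfl fun t _ => ?_
        rw [← Fin.sum_univ_eq_sum_range (fun jv => GfBZ k' v ss α hb D ⟨u, t⟩ jv) (ss u)]
        refine Finset.sum_congr rfl fun j _ => ?_
        simp only [GfBZ]
        rw [dif_pos j.isLt]
    _ = ∑ p : (u : Fin r) × Fin (k' ((u : ℕ) + 1) - k' (u : ℕ)),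
          ∑ jv ∈ Finset.range (ss p.1), GfBZ k' v ss α hb D p jv := by
        rw [← Finset.univ_sigma_univ, Finset.sum_sigma]

lemma resBZ [DecidableEq F] (α : ℕ) (hb : ∀ u : Fin r, k' ((u : ℕ) + 1) ≤ s')
    (D : (u : Fin r) → Fin (ss u) → Fin n → Fin (k' ((u : ℕ) + 1) - k' (u : ℕ)) → F)
    (N : ℕ) (p : (u : Fin r) × Fin (k' ((u : ℕ) + 1) - k' (u : ℕ))) :
    ∑ jv ∈ Finset.range N, GfBZ k' v ss α hb D p jv
      ≤ ∑ jv ∈ Finset.range (ss p.1), GfBZ k' v ss α hb D p jv := by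
  classical
  rw [← Finset.sum_filter_of_ne (s := Finset.range N)
    (p := fun jv => jv < ss p.1) (f := fun jv => GfBZ k' v ss α hb D p jv)
    (by intro x _ hx; by_contra hcon; exact hx (by simp only [GfBZ]; rw [dif_neg hcon]))]
  apply Finset.sum_le_sum_of_subset
  intro jv hjv
  rw [Finset.mem_filter] at hjv
  exact Finset.mem_range.mpr hjv.2

end BZ2

/-- Blokh–Zyablov construction with outer spaces of varying lengths: given a chain of inner
linear `[s',k'_u,δ'_u]_q`-codes with upper triangular generators `v_1, v_2, …` and outer
`((s_u,n),α,K_u,δ_u)_{q^{e_u}}`-spaces with `s_1 ≤ … ≤ s_r`, one can construct an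
`((s_1e_1 + ⋯ + s_re_r, n), α, K_1⋯K_r, δ)_q`-space with `δ ≥ min_{1≤u≤r} δ_u δ'_u`. -/
theorem blokh_zyablov_varying_lengths (q : ℕ) (F : Type*) [Field F] [Fintype F] [DecidableEq F]
    (hq : Fintype.card F = q) (n s' α r : ℕ) (hn : 1 ≤ n) (hs' : 1 ≤ s') (hα : 1 ≤ α)
    (hr : 1 ≤ r) (k' : ℕ → ℕ) (hk0 : k' 0 = 0) (hmono : ∀ u, u < r → k' u < k' (u + 1))
    (hkr : k' r = s') (v : ℕ → Fin s' → F)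
    (htri : ∀ i : ℕ, ∀ j : Fin s', (j : ℕ) < i → v i j = 0)
    (hlin : LinearIndependent F (fun i : Fin s' => v (i : ℕ)))
    (htop : Submodule.span F (v '' {i | i < k' r}) = ⊤)
    (δ' : ℕ → ℕ)
    (hδ' : ∀ u : ℕ, 1 ≤ u → u ≤ r →
      (∀ w ∈ Submodule.span F (v '' {i | i < k' u}), w ≠ 0 → δ' u ≤ hammingW w) ∧
      (∃ w ∈ Submodule.span F (v '' {i | i < k' u}), w ≠ 0 ∧ hammingW w = δ' u))
    (ss : Fin r → ℕ) (hss1 : ∀ u, 1 ≤ ss u) (hssmono : ∀ u u' : Fin r, u ≤ u' → ss u ≤ ss u')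
    (Nout : (u : Fin r) → Set (Fin (ss u) → Fin n → (Fin (k' ((u : ℕ) + 1) - k' (u : ℕ)) → F)))
    (K : Fin r → ℕ) (hfin : ∀ u, (Nout u).Finite)
    (hK : ∀ u, (Nout u).ncard = K u ∧ (Nout u).Nonempty)
    (δo : Fin r → ℕ)
    (hδo : ∀ u, (∀ A ∈ Nout u, ∀ B ∈ Nout u, A ≠ B → δo u ≤ muWt α (A - B)) ∧
      (1 < K u → ∃ A ∈ Nout u, ∃ B ∈ Nout u, A ≠ B ∧ muWt α (A - B) = δo u)) :
    ∃ Nbig : Set (Fin (∑ u : Fin r, (k' ((u : ℕ) + 1) - k' (u : ℕ)) * ss u) → Fin n → F),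
      Nbig.ncard = ∏ u, K u ∧
      ∀ A ∈ Nbig, ∀ B ∈ Nbig, A ≠ B →
        ∃ u : Fin r, δo u * δ' ((u : ℕ) + 1) ≤ muWt α (A - B) := by
  classical
  have hkmono : ∀ a b : ℕ, a ≤ b → b ≤ r → k' a ≤ k' b := by
    intro a b hab hbr
    induction b with
    | zero =>
      have : a = 0 := by omega
      simp [this]
    | succ b ih =>
      rcases Nat.lt_or_ge a (b + 1) with h | h
      · have h1 : k' a ≤ k' b := ih (by omega) (by omega)
        have h2 : k' b < k' (b + 1) := hmono b (by omega)
        omega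
      · have : a = b + 1 := by omega
        simp [this]
  have hb : ∀ u : Fin r, k' ((u : ℕ) + 1) ≤ s' := by
    intro u
    have := hkmono ((u : ℕ) + 1) r (by have := u.isLt; omega) le_rfl
    omega
  have hsep : ∀ p q : (u : Fin r) × Fin (k' ((u : ℕ) + 1) - k' (u : ℕ)),
      k' (p.1 : ℕ) + (p.2 : ℕ) ≤ k' (q.1 : ℕ) + (q.2 : ℕ) → p.1 ≤ q.1 := by
    intro p q hle
    by_contra hcon
    push_neg at hcon
    have h1 : (q.1 : ℕ) < (p.1 : ℕ) := hcon
    have h2 : k' ((q.1 : ℕ) + 1) ≤ k' (p.1 : ℕ) := hkmono _ _ h1 (by have := p.1.isLt; omega)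
    have h3 := q.2.isLt
    have h4 := p.2.isLt
    omega
  have hk : ∀ (U : Fin r) (p : (u : Fin r) × Fin (k' ((u : ℕ) + 1) - k' (u : ℕ))),
      p.1 ≤ U → k' (p.1 : ℕ) + (p.2 : ℕ) < k' ((U : ℕ) + 1) := by
    intro U p hpU
    have h1 := p.2.isLt
    have h0 : (p.1 : ℕ) ≤ (U : ℕ) := hpU
    have h2 : k' ((p.1 : ℕ) + 1) ≤ k' ((U : ℕ) + 1) :=
      hkmono _ _ (by omega) (by have := U.isLt; omega)
    omega
  have hinj : Function.Injective (pairIdx (r := r) k' hb) := by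
    intro p q h
    have hv : k' (p.1 : ℕ) + (p.2 : ℕ) = k' (q.1 : ℕ) + (q.2 : ℕ) := congrArg Fin.val h
    have h1 := hsep p q (le_of_eq hv)
    have h2 := hsep q p (le_of_eq hv.symm)
    have h12 : p.1 = q.1 := le_antisymm h1 h2
    obtain ⟨a, t⟩ := p
    obtain ⟨b, s⟩ := q
    dsimp at h12
    subst h12
    dsimp at hv
    have : t = s := Fin.ext (by omega)
    rw [this]
  have htel : ∀ N, N ≤ r → ∑ m ∈ Finset.range N, (k' (m + 1) - k' m) = k' N - k' 0 := by
    intro N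
    induction N with
    | zero => intro _; simp
    | succ N ih =>
      intro hN
      rw [Finset.sum_range_succ, ih (by omega)]
      have h1 : k' 0 ≤ k' N := hkmono 0 N (by omega) (by omega)
      have h2 : k' N ≤ k' (N + 1) := hkmono N (N + 1) (by omega) hN
      omega
  have hcardPair : Fintype.card ((u : Fin r) × Fin (k' ((u : ℕ) + 1) - k' (u : ℕ))) = s' := by
    rw [Fintype.card_sigma]
    simp only [Fintype.card_fin]
    rw [Fin.sum_univ_eq_sum_range (fun m => k' (m + 1) - k' m) r, htel r le_rfl, hk0, hkr]
    omega
  have hbij : Function.Bijective (pairIdx (r := r) k' hb) :=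
    (Fintype.bijective_iff_injective_and_card _).mpr
      ⟨hinj, by rw [Fintype.card_fin]; exact hcardPair⟩
  set E : ((u : Fin r) × Fin (k' ((u : ℕ) + 1) - k' (u : ℕ))) ≃ Fin s' :=
    Equiv.ofBijective _ hbij with hE
  have hcardI : Fintype.card ((u : Fin r) × (Fin (k' ((u : ℕ) + 1) - k' (u : ℕ)) × Fin (ss u)))
      = ∑ u : Fin r, (k' ((u : ℕ) + 1) - k' (u : ℕ)) * ss u := by
    rw [Fintype.card_sigma]
    simp [Fintype.card_prod, Fintype.card_fin]
  set E2 := Fintype.equivFinOfCardEq hcardI with hE2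
  set f : ((u : Fin r) → Fin (ss u) → Fin n → Fin (k' ((u : ℕ) + 1) - k' (u : ℕ)) → F) →
      (Fin (∑ u : Fin r, (k' ((u : ℕ) + 1) - k' (u : ℕ)) * ss u) → Fin n → F) :=
    fun A x => encBZ k' v ss hb A (E2.symm x) with hf
  have hsubE : ∀ A B : (u : Fin r) → Fin (ss u) → Fin n → Fin (k' ((u : ℕ) + 1) - k' (u : ℕ)) → F,
      ∀ y i, encBZ k' v ss hb (fun u => A u - B u) y i
        = encBZ k' v ss hb A y i - encBZ k' v ss hb B y i := by
    intro A B y i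
    simp only [encBZ]
    rw [colW_sub]
    rfl
  have hnonzero : ∀ D : (u : Fin r) → Fin (ss u) → Fin n → Fin (k' ((u : ℕ) + 1) - k' (u : ℕ)) → F,
      (∃ (u : Fin r) (j : Fin (ss u)) (i : Fin n) (t : Fin (k' ((u : ℕ) + 1) - k' (u : ℕ))),
        D u j i t ≠ 0) →
      ∃ y i, encBZ k' v ss hb D y i ≠ 0 := by
    rintro D ⟨u, j, i, t, hD⟩
    have hw : colW k' v ss D (j : ℕ) i ≠ 0 := by
      apply colW_ne_zero k' v ss hb hbij hlin
      refine ⟨⟨u, t⟩, ?_⟩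
      show (if h : (j : ℕ) < ss u then D u ⟨(j : ℕ), h⟩ i t else 0) ≠ 0
      rw [dif_pos j.isLt]
      exact hD
    obtain ⟨m, hm⟩ := Function.ne_iff.mp hw
    have hm' : colW k' v ss D (j : ℕ) i m ≠ 0 := hm
    have hpm : pairIdx k' hb (E.symm m) = m := E.apply_symm_apply m
    have hwp : colW k' v ss D (j : ℕ) i (pairIdx k' hb (E.symm m)) ≠ 0 := by
      rw [hpm]; exact hm'
    have hjp : (j : ℕ) < ss (E.symm m).1 := by
      by_contra hcon
      push_neg at hcon
      exact hwp (colW_deleted k' v ss hb htri hsep hssmono D (j : ℕ) i (E.symm m) hcon)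
    exact ⟨⟨(E.symm m).1, ((E.symm m).2, ⟨(j : ℕ), hjp⟩)⟩, i, hwp⟩
  have hinjf : Function.Injective f := by
    intro A B hAB
    by_contra hne
    have hex : ∃ u, A u ≠ B u := by
      by_contra h
      push_neg at h
      exact hne (funext h)
    obtain ⟨u, hu⟩ := hex
    obtain ⟨j, hj⟩ := Function.ne_iff.mp hu
    obtain ⟨i, hi⟩ := Function.ne_iff.mp hj
    obtain ⟨t, ht⟩ := Function.ne_iff.mp hi
    obtain ⟨y, i0, hy⟩ := hnonzero (fun u' => A u' - B u') ⟨u, j, i, t, sub_ne_zero.mpr ht⟩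
    apply hy
    rw [hsubE]
    have h2 : encBZ k' v ss hb A y i0 = encBZ k' v ss hb B y i0 := by
      have := congrFun (congrFun hAB (E2 y)) i0
      simp only [hf] at this
      rwa [Equiv.symm_apply_apply] at this
    rw [h2, sub_self]
  have hdist : ∀ A0 B0 : (u : Fin r) → Fin (ss u) → Fin n → Fin (k' ((u : ℕ) + 1) - k' (u : ℕ)) → F,
      (∀ u, A0 u ∈ Nout u) → (∀ u, B0 u ∈ Nout u) → A0 ≠ B0 →
      ∃ u : Fin r, δo u * δ' ((u : ℕ) + 1) ≤
        ∑ y : (u : Fin r) × (Fin (k' ((u : ℕ) + 1) - k' (u : ℕ)) × Fin (ss u)),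
          muBlock α (encBZ k' v ss hb (fun u' => A0 u' - B0 u') y) := by
    intro A0 B0 hA0 hB0 hne
    set D : (u : Fin r) → Fin (ss u) → Fin n → Fin (k' ((u : ℕ) + 1) - k' (u : ℕ)) → F :=
      fun u => A0 u - B0 u with hD
    have hUne : (Finset.univ.filter (fun u : Fin r => D u ≠ 0)).Nonempty := by
      have hex : ∃ u, A0 u ≠ B0 u := by
        by_contra h; push_neg at h; exact hne (funext h)
      obtain ⟨u, hu⟩ := hex
      exact ⟨u, Finset.mem_filter.mpr ⟨Finset.mem_univ _, sub_ne_zero.mpr hu⟩⟩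
    set us := (Finset.univ.filter (fun u : Fin r => D u ≠ 0)).max' hUne with hus
    have husne : D us ≠ 0 := (Finset.mem_filter.mp (Finset.max'_mem _ hUne)).2
    have hmax : ∀ u' : Fin r, us < u' → D u' = 0 := by
      intro u' hu'
      by_contra h
      have : u' ≤ us := Finset.le_max' (Finset.univ.filter (fun u : Fin r => D u ≠ 0)) u'
        (Finset.mem_filter.mpr ⟨Finset.mem_univ _, h⟩)
      exact absurd hu' (not_lt.mpr this)
    refine ⟨us, ?_⟩
    have hcol : ∀ (jv : ℕ) (hjv : jv < ss us),
        δ' ((us : ℕ) + 1) * muBlock α (D us ⟨jv, hjv⟩)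
          ≤ ∑ p : (u : Fin r) × Fin (k' ((u : ℕ) + 1) - k' (u : ℕ)),
              GfBZ k' v ss α hb D p jv := by
      intro jv hjv
      obtain ⟨St, hStcard, hStmem, hStsum⟩ := muBlock_spec α (D us ⟨jv, hjv⟩)
      set Vq : ℕ → Finset ((u : Fin r) × Fin (k' ((u : ℕ) + 1) - k' (u : ℕ))) :=
        fun qq => Finset.univ.filter (fun p => ∃ hp : jv < ss p.1, ∃ i : Fin n,
          encBZ k' v ss hb D ⟨p.1, (p.2, ⟨jv, hp⟩)⟩ i ≠ 0 ∧ qq = (i : ℕ) + 1) with hVq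
      have stepA : ∀ qq ∈ St, δ' ((us : ℕ) + 1) ≤ (Vq qq).card := by
        intro qq hqq
        obtain ⟨i, hi, hqe⟩ := hStmem qq hqq
        have hwspan := colW_mem_span k' v ss D jv i us (hk us) hmax
        have hwne : colW k' v ss D jv i ≠ 0 := by
          obtain ⟨t, ht⟩ := Function.ne_iff.mp hi
          apply colW_ne_zero k' v ss hb hbij hlin
          refine ⟨⟨us, t⟩, ?_⟩
          show (if h : jv < ss us then D us ⟨jv, h⟩ i t else 0) ≠ 0
          rw [dif_pos hjv]
          exact ht
        have hham := (hδ' ((us : ℕ) + 1) (by omega) (by have := us.isLt; omega)).1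
          (colW k' v ss D jv i) hwspan hwne
        refine le_trans hham ?_
        show (Finset.univ.filter (fun m => colW k' v ss D jv i m ≠ 0)).card ≤ (Vq qq).card
        apply Finset.card_le_card_of_injOn (fun m => E.symm m)
        · intro m hm
          have hm' : colW k' v ss D jv i m ≠ 0 := (Finset.mem_filter.mp hm).2
          have hpm : pairIdx k' hb (E.symm m) = m := E.apply_symm_apply m
          have hwp : colW k' v ss D jv i (pairIdx k' hb (E.symm m)) ≠ 0 := by
            rw [hpm]; exact hm'
          have hjp : jv < ss (E.symm m).1 := by
            by_contra hcon
            push_neg at hcon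
            exact hwp (colW_deleted k' v ss hb htri hsep hssmono D jv i (E.symm m) hcon)
          rw [hVq]
          exact Finset.mem_filter.mpr ⟨Finset.mem_univ _, hjp, i, hwp, hqe⟩
        · exact fun a _ b _ h => E.symm.injective h
      have stepB : ∀ p : (u : Fin r) × Fin (k' ((u : ℕ) + 1) - k' (u : ℕ)),
          ∑ qq ∈ St.filter (fun qq => p ∈ Vq qq), qq ≤ GfBZ k' v ss α hb D p jv := by
        intro p
        by_cases hp : jv < ss p.1
        · have hGf : GfBZ k' v ss α hb D p jv
              = muBlock α (encBZ k' v ss hb D ⟨p.1, (p.2, ⟨jv, hp⟩)⟩) := by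
            simp only [GfBZ]; rw [dif_pos hp]
          rw [hGf]
          apply sum_le_muBlock
          · intro qq hqq
            have hmem := (Finset.mem_filter.mp hqq).2
            rw [hVq] at hmem
            rw [Finset.mem_filter] at hmem
            obtain ⟨-, hp', i, hi, hqe⟩ := hmem
            exact ⟨i, hi, hqe⟩
          · exact le_trans (Finset.card_le_card (Finset.filter_subset _ _)) hStcard
        · have hemp : St.filter (fun qq => p ∈ Vq qq) = ∅ := by
            apply Finset.filter_false_of_mem
            intro qq _ hmem
            rw [hVq] at hmem
            rw [Finset.mem_filter] at hmem
            obtain ⟨-, hp', -⟩ := hmem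
            exact hp hp'
          rw [hemp, Finset.sum_empty]
          exact Nat.zero_le _
      calc δ' ((us : ℕ) + 1) * muBlock α (D us ⟨jv, hjv⟩)
          = ∑ qq ∈ St, δ' ((us : ℕ) + 1) * qq := by rw [← Finset.mul_sum, hStsum]
        _ ≤ ∑ qq ∈ St, (Vq qq).card * qq :=
            Finset.sum_le_sum fun qq hqq => Nat.mul_le_mul_right _ (stepA qq hqq)
        _ = ∑ qq ∈ St, ∑ _p ∈ Vq qq, qq := by
            refine Finset.sum_congr rfl fun qq _ => ?_
            rw [Finset.sum_const, smul_eq_mul]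
        _ = ∑ qq ∈ St, ∑ p : (u : Fin r) × Fin (k' ((u : ℕ) + 1) - k' (u : ℕ)),
              if p ∈ Vq qq then qq else 0 := by
            refine Finset.sum_congr rfl fun qq _ => ?_
            rw [Finset.sum_ite_mem, Finset.univ_inter]
        _ = ∑ p : (u : Fin r) × Fin (k' ((u : ℕ) + 1) - k' (u : ℕ)), ∑ qq ∈ St,
              if p ∈ Vq qq then qq else 0 := Finset.sum_comm
        _ = ∑ p : (u : Fin r) × Fin (k' ((u : ℕ) + 1) - k' (u : ℕ)),
              ∑ qq ∈ St.filter (fun qq => p ∈ Vq qq), qq := by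
            refine Finset.sum_congr rfl fun p _ => ?_
            rw [Finset.sum_filter]
        _ ≤ ∑ p : (u : Fin r) × Fin (k' ((u : ℕ) + 1) - k' (u : ℕ)),
              GfBZ k' v ss α hb D p jv :=
            Finset.sum_le_sum fun p _ => stepB p
    have houter : δo us ≤ muWt α (D us) :=
      (hδo us).1 (A0 us) (hA0 us) (B0 us) (hB0 us) (sub_ne_zero.mp husne)
    calc δo us * δ' ((us : ℕ) + 1)
        = δ' ((us : ℕ) + 1) * δo us := Nat.mul_comm _ _
      _ ≤ δ' ((us : ℕ) + 1) * muWt α (D us) := Nat.mul_le_mul_left _ houter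
      _ = ∑ j : Fin (ss us), δ' ((us : ℕ) + 1) * muBlock α (D us j) := by
          rw [show muWt α (D us) = ∑ j : Fin (ss us), muBlock α (D us j) from rfl,
            Finset.mul_sum]
      _ ≤ ∑ j : Fin (ss us), ∑ p : (u : Fin r) × Fin (k' ((u : ℕ) + 1) - k' (u : ℕ)),
            GfBZ k' v ss α hb D p (j : ℕ) :=
          Finset.sum_le_sum fun j _ => hcol (j : ℕ) j.isLt
      _ = ∑ jv ∈ Finset.range (ss us), ∑ p : (u : Fin r) × Fin (k' ((u : ℕ) + 1) - k' (u : ℕ)),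
            GfBZ k' v ss α hb D p jv :=
          Fin.sum_univ_eq_sum_range
            (fun jv => ∑ p : (u : Fin r) × Fin (k' ((u : ℕ) + 1) - k' (u : ℕ)),
              GfBZ k' v ss α hb D p jv) (ss us)
      _ = ∑ p : (u : Fin r) × Fin (k' ((u : ℕ) + 1) - k' (u : ℕ)),
            ∑ jv ∈ Finset.range (ss us), GfBZ k' v ss α hb D p jv := Finset.sum_comm
      _ ≤ ∑ p : (u : Fin r) × Fin (k' ((u : ℕ) + 1) - k' (u : ℕ)),
            ∑ jv ∈ Finset.range (ss p.1), GfBZ k' v ss α hb D p jv :=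
          Finset.sum_le_sum fun p _ => resBZ k' v ss α hb D (ss us) p
      _ = ∑ y : (u : Fin r) × (Fin (k' ((u : ℕ) + 1) - k' (u : ℕ)) × Fin (ss u)),
            muBlock α (encBZ k' v ss hb D y) := (sumBZ k' v ss α hb D).symm
  refine ⟨f '' {A | ∀ u, A u ∈ Nout u}, ?_, ?_⟩
  · rw [Set.ncard_image_of_injOn (hinjf.injOn)]
    have hPeq : {A : (u : Fin r) → Fin (ss u) → Fin n → Fin (k' ((u : ℕ) + 1) - k' (u : ℕ)) → F |
        ∀ u, A u ∈ Nout u} = ↑(Fintype.piFinset fun u => (hfin u).toFinset) := by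
      ext A
      simp only [Set.mem_setOf_eq, Finset.coe_sort_coe, Finset.mem_coe,
        Fintype.mem_piFinset, Set.Finite.mem_toFinset]
    rw [hPeq, Set.ncard_coe_finset, Fintype.card_piFinset]
    exact Finset.prod_congr rfl fun u _ => by
      rw [← Set.ncard_eq_toFinset_card (Nout u) (hfin u)]
      exact (hK u).1
  · rintro A ⟨A0, hA0, rfl⟩ B ⟨B0, hB0, rfl⟩ hABne
    have hne : A0 ≠ B0 := fun h => hABne (by rw [h])
    obtain ⟨u, hu⟩ := hdist A0 B0 hA0 hB0 hne
    refine ⟨u, le_trans hu (le_of_eq ?_)⟩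
    have hptw : ∀ x, (f A0 - f B0) x
        = encBZ k' v ss hb (fun u' => A0 u' - B0 u') (E2.symm x) := by
      intro x
      funext i
      show f A0 x i - f B0 x i = _
      rw [hsubE]
    calc (∑ y : (u : Fin r) × (Fin (k' ((u : ℕ) + 1) - k' (u : ℕ)) × Fin (ss u)),
            muBlock α (encBZ k' v ss hb (fun u' => A0 u' - B0 u') y))
        = ∑ x : Fin (∑ u : Fin r, (k' ((u : ℕ) + 1) - k' (u : ℕ)) * ss u),
            muBlock α (encBZ k' v ss hb (fun u' => A0 u' - B0 u') (E2.symm x)) :=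
          (Equiv.sum_comp E2.symm
            (fun y => muBlock α (encBZ k' v ss hb (fun u' => A0 u' - B0 u') y))).symm
      _ = ∑ x : Fin (∑ u : Fin r, (k' ((u : ℕ) + 1) - k' (u : ℕ)) * ss u),
            muBlock α ((f A0 - f B0) x) :=
          Finset.sum_congr rfl (fun x _ => by rw [hptw x])
      _ = muWt α (f A0 - f B0) := rfl
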